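/- Let n > 1 and let k be an integer with 1 ≤ k < z_1(n). If z_1(k) = F_t, then z_1(n − k) is equal to F_{t+1} or to F_{t−1}. -/

import Mathlib

/-- `IsZeck n l` says that `l` is the Zeckendorf representation of `n`, recorded as the
list of indices of the Fibonacci parts in increasing order: every index is at least `2`,
consecutive indices differ by at least `2` (no two consecutive Fibonacci numbers), and the
corresponding Fibonacci numbers sum to `n`.  The parts of the Zeckendorf representation in
increasing order are then `z₁(n) = Nat.fib l.headI`, `z₂(n) = Nat.fib (l.getD 1 0)`, etc. -/
def IsZeck (n : ℕ) (l : List ℕ) : Prop :=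
  (∀ i ∈ l, 2 ≤ i) ∧ l.Chain' (fun a b => a + 2 ≤ b) ∧ (l.map Nat.fib).sum = n

open List Nat

private instance : IsTrans ℕ (fun a b : ℕ => a + 2 ≤ b) := ⟨fun _ _ _ h1 h2 => by omega⟩

private lemma isZeck_reverse_rep {n : ℕ} {l : List ℕ} (h : IsZeck n l) :
    l.reverse.IsZeckendorfRep := by
  obtain ⟨h2, hc, _⟩ := h
  unfold List.IsZeckendorfRep
  have : l.reverse ++ [0] = (0 :: l).reverse := by simp
  rw [this, List.isChain_reverse]
  rw [List.isChain_cons]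
  constructor
  · intro y hy
    have : y ∈ l := List.mem_of_mem_head? hy
    have := h2 y this
    simp [Function.flip_def]
    omega
  · exact hc.imp (fun {a b} hab => by omega)

private lemma isZeck_unique {n : ℕ} {l₁ l₂ : List ℕ} (h₁ : IsZeck n l₁) (h₂ : IsZeck n l₂) :
    l₁ = l₂ := by
  have key : ∀ {l : List ℕ}, IsZeck n l → l.reverse = Nat.zeckendorf n := by
    intro l hl
    have := Nat.zeckendorf_sum_fib (isZeck_reverse_rep hl)
    rw [List.map_reverse, List.sum_reverse, hl.2.2] at this
    exact this.symm
  exact List.reverse_injective ((key h₁).trans (key h₂).symm)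

private lemma zeck_sum_lt : ∀ (l : List ℕ) (m : ℕ), (∀ i ∈ l, 2 ≤ i) →
    l.Pairwise (fun a b => a + 2 ≤ b) → (∀ i ∈ l, i ≤ m) →
    (l.map Nat.fib).sum < Nat.fib (m + 1) := by
  intro l
  induction l using List.reverseRecOn with
  | nil => intro m _ _ _; simp only [List.map_nil, List.sum_nil]; exact Nat.fib_pos.2 (Nat.succ_pos m)
  | append_singleton l b ih =>
    intro m h2 hp hm
    have hp' := List.pairwise_append.1 hp
    have hb2 : 2 ≤ b := h2 b (by simp)
    obtain ⟨c, rfl⟩ : ∃ c, b = c + 2 := ⟨b - 2, by omega⟩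
    have hlb : ∀ i ∈ l, i ≤ c := fun i hi => by
      have := hp'.2.2 i hi (c + 2) (by simp); omega
    have ih' := ih c (fun i hi => h2 i (by simp [hi])) hp'.1 hlb
    have hfib : Nat.fib (c + 3) = Nat.fib (c + 1) + Nat.fib (c + 2) := Nat.fib_add_two
    have hm' : Nat.fib (c + 3) ≤ Nat.fib (m + 1) := by
      apply Nat.fib_mono
      have := hm (c + 2) (by simp)
      omega
    rw [List.map_append, List.sum_append]
    simp only [List.map_cons, List.map_nil, List.sum_cons, List.sum_nil, add_zero]
    omega

private lemma zeck_pos_ne_nil {n : ℕ} {l : List ℕ} (h : IsZeck n l) (hn : 1 ≤ n) : l ≠ [] := by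
  intro he
  rw [he] at h
  simp [IsZeck] at h
  omega

private lemma zeck_nil_of_zero {l : List ℕ} (h : IsZeck 0 l) : l = [] := by
  rcases l with _ | ⟨c, r⟩
  · rfl
  · exfalso
    have h2 : 2 ≤ c := h.1 c (by simp)
    have := h.2.2
    simp only [List.map_cons, List.sum_cons] at this
    have : 1 ≤ Nat.fib c := Nat.fib_pos.2 (by omega)
    omega

private lemma fib_inj {s t : ℕ} (hs : 2 ≤ s) (ht : 2 ≤ t) (h : Nat.fib s = Nat.fib t) :
    s = t := by
  by_contra hne
  have key : ∀ u v : ℕ, 2 ≤ u → u < v → Nat.fib u < Nat.fib v := by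
    intro u v hu huv
    calc Nat.fib u < Nat.fib (u + 1) := Nat.fib_lt_fib_succ hu
    _ ≤ Nat.fib v := Nat.fib_mono huv
  rcases Nat.lt_or_ge s t with hlt | hge
  · exact absurd h (Nat.ne_of_lt (key s t hs hlt))
  · have hlt : t < s := by omega
    exact absurd h.symm (Nat.ne_of_lt (key t s ht hlt))

/-- Key lemma: if `1 ≤ k < fib a`, then `fib a - k` has a Zeckendorf representation
with all indices `< a` whose smallest part is `fib (z₁-index(k) ± 1)`. -/
private lemma zeck_fib_sub : ∀ a : ℕ, ∀ k : ℕ, ∀ lk : List ℕ, 1 ≤ k → k < Nat.fib a →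
    IsZeck k lk →
    ∃ l' : List ℕ, IsZeck (Nat.fib a - k) l' ∧ (∀ i ∈ l', i < a) ∧
      (Nat.fib l'.headI = Nat.fib (lk.headI + 1) ∨ Nat.fib l'.headI = Nat.fib (lk.headI - 1)) := by
  intro a
  induction a using Nat.strong_induction_on with
  | _ a ih =>
    intro k lk hk1 hka hlk
    -- lk is nonempty; write lk = lk₀ ++ [b]
    rcases lk.eq_nil_or_concat with rfl | ⟨lk₀, b, rfl⟩
    · exfalso; exact zeck_pos_ne_nil hlk hk1 rfl
    rw [List.concat_eq_append] at hlk ⊢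
    obtain ⟨h2all, hchain, hsum⟩ := hlk
    have hpair : (lk₀ ++ [b]).Pairwise (fun a b => a + 2 ≤ b) :=
      List.isChain_iff_pairwise.1 hchain
    have hpair' := List.pairwise_append.1 hpair
    have hb2 : 2 ≤ b := h2all b (by simp)
    set k₀ := (lk₀.map Nat.fib).sum with hk₀def
    have hsum' : k₀ + Nat.fib b = k := by
      rw [hk₀def]; rw [List.map_append, List.sum_append] at hsum; simpa using hsum
    have h2l : ∀ i ∈ lk₀, 2 ≤ i := fun i hi => h2all i (by simp [hi])
    have hlb : ∀ i ∈ lk₀, i + 2 ≤ b := fun i hi => hpair'.2.2 i hi b (by simp)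
    have hzk₀ : IsZeck k₀ lk₀ := ⟨h2l, (List.isChain_iff_pairwise.2 hpair'.1), rfl⟩
    have hk₀lt : k₀ < Nat.fib (b - 1) := by
      have := zeck_sum_lt lk₀ (b - 2) h2l hpair'.1 (fun i hi => by have := hlb i hi; omega)
      have he : b - 2 + 1 = b - 1 := by omega
      rwa [he] at this
    -- b < a
    have hfb_le : Nat.fib b ≤ k := by omega
    have hba : b < a := by
      by_contra hc
      have : Nat.fib a ≤ Nat.fib b := Nat.fib_mono (by omega)
      omega
    have ha3 : 3 ≤ a := by
      by_contra hc
      have hfa : Nat.fib a ≤ 1 := by interval_cases a <;> simp [Nat.fib]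
      omega
    -- fib recurrences we will need
    have hfibrec : ∀ c : ℕ, 2 ≤ c → Nat.fib (c - 1) + Nat.fib c = Nat.fib (c + 1) := by
      intro c hc
      obtain ⟨d, rfl⟩ : ∃ d, c = d + 2 := ⟨c - 2, by omega⟩
      show Nat.fib (d + 1) + Nat.fib (d + 2) = Nat.fib (d + 3)
      exact Nat.fib_add_two.symm
    -- headI facts
    have hheadI : lk₀ ≠ [] → (lk₀ ++ [b]).headI = lk₀.headI := by
      rcases lk₀ with _ | ⟨c, r⟩
      · intro h; exact absurd rfl h
      · intro _; rfl
    rcases Nat.lt_trichotomy b (a - 2) with hb | hb | hb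
    · -- b ≤ a - 3 : fib a - k = fib (a-1) + (fib (a-2) - k)
      have hklt : k < Nat.fib (a - 2) := by
        have h1 : k < Nat.fib (b + 1) := by
          have := hfibrec b hb2; omega
        have h2 : Nat.fib (b + 1) ≤ Nat.fib (a - 2) := Nat.fib_mono (by omega)
        omega
      obtain ⟨l'', hz'', hlt'', hh''⟩ := ih (a - 2) (by omega) k (lk₀ ++ [b]) hk1 hklt
        ⟨h2all, hchain, hsum⟩
      refine ⟨l'' ++ [a - 1], ?_, ?_, ?_⟩
      · refine ⟨?_, ?_, ?_⟩
        · intro i hi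
          rcases List.mem_append.1 hi with hi | hi
          · exact hz''.1 i hi
          · simp at hi; omega
        · apply List.isChain_append.2
          refine ⟨hz''.2.1, List.isChain_singleton _, ?_⟩
          intro x hx y hy
          simp at hy
          have hxl : x ∈ l'' := List.mem_of_mem_getLast? hx
          have := hlt'' x hxl
          omega
        · rw [List.map_append, List.sum_append]
          simp only [List.map_cons, List.map_nil, List.sum_cons, List.sum_nil, add_zero]
          rw [hz''.2.2]
          have hrec : Nat.fib (a - 2) + Nat.fib (a - 1) = Nat.fib a := by
            have := hfibrec (a - 1) (by omega)
            have he1 : a - 1 - 1 = a - 2 := by omega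
            have he2 : a - 1 + 1 = a := by omega
            rw [he1, he2] at this
            exact this
          omega
      · intro i hi
        rcases List.mem_append.1 hi with hi | hi
        · have := hlt'' i hi; omega
        · simp at hi; omega
      · have hne : l'' ≠ [] := by
          intro he
          have := hz''.2.2
          rw [he] at this
          simp at this
          omega
        rcases l'' with _ | ⟨c, r⟩
        · exact absurd rfl hne
        · simpa using hh''
    · -- b = a - 2 : fib a - k = fib (a-1) - k₀
      have ha : a = b + 2 := by omega
      subst ha
      have hfasub : Nat.fib (b + 2) - k = Nat.fib (b + 1) - k₀ := by
        have : Nat.fib (b + 2) = Nat.fib b + Nat.fib (b + 1) := Nat.fib_add_two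
        omega
      rcases Nat.eq_zero_or_pos k₀ with hk₀ | hk₀
      · -- k = fib b, lk₀ = []
        have hnil : lk₀ = [] := zeck_nil_of_zero (hk₀ ▸ hzk₀)
        subst hnil
        simp only [List.nil_append] at *
        refine ⟨[b + 1], ⟨?_, List.isChain_singleton _, ?_⟩, ?_, ?_⟩
        · intro i hi; simp at hi; omega
        · simp [hfasub, hk₀]
        · intro i hi; simp at hi; omega
        · left; simp
      · obtain ⟨l'', hz'', hlt'', hh''⟩ := ih (b + 1) (by omega) k₀ lk₀ hk₀
          (lt_of_lt_of_le hk₀lt (Nat.fib_mono (by omega))) hzk₀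
        rw [← hfasub] at hz''
        have hne : lk₀ ≠ [] := zeck_pos_ne_nil hzk₀ hk₀
        refine ⟨l'', hz'', fun i hi => by have := hlt'' i hi; omega, ?_⟩
        rw [hheadI hne]
        exact hh''
    · -- b = a - 1 : fib a - k = fib (a-2) - k₀
      have ha : a = b + 1 := by omega
      subst ha
      have hfasub : Nat.fib (b + 1) - k = Nat.fib (b - 1) - k₀ := by
        have := hfibrec b hb2
        omega
      rcases Nat.eq_zero_or_pos k₀ with hk₀ | hk₀
      · -- k = fib b, result is fib (b-1)
        have hnil : lk₀ = [] := zeck_nil_of_zero (hk₀ ▸ hzk₀)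
        subst hnil
        simp only [List.nil_append] at *
        refine ⟨[max 2 (b - 1)], ⟨?_, List.isChain_singleton _, ?_⟩, ?_, ?_⟩
        · intro i hi; simp at hi; omega
        · simp only [List.map_cons, List.map_nil, List.sum_cons, List.sum_nil, add_zero]
          rw [hfasub, hk₀, Nat.sub_zero]
          rcases Nat.lt_or_ge b 3 with hb3 | hb3
          · have : b = 2 := by omega
            subst this
            simp [Nat.fib]
          · rw [max_eq_right (by omega)]
        · intro i hi; simp at hi; omega
        · right
          simp only [List.headI]
          rcases Nat.lt_or_ge b 3 with hb3 | hb3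
          · have : b = 2 := by omega
            subst this
            simp [Nat.fib]
          · rw [max_eq_right (by omega)]
      · have hb1 : 2 ≤ b - 1 := by
          -- lk₀ nonempty with elements ≤ b - 2 and ≥ 2 forces b ≥ 4
          have hne : lk₀ ≠ [] := zeck_pos_ne_nil hzk₀ hk₀
          rcases lk₀ with _ | ⟨c, r⟩
          · exact absurd rfl hne
          · have h1 := h2l c (by simp)
            have h2 := hlb c (by simp)
            omega
        obtain ⟨l'', hz'', hlt'', hh''⟩ := ih (b - 1) (by omega) k₀ lk₀ hk₀ hk₀lt hzk₀
        rw [← hfasub] at hz''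
        have hne : lk₀ ≠ [] := zeck_pos_ne_nil hzk₀ hk₀
        refine ⟨l'', hz'', fun i hi => by have := hlt'' i hi; omega, ?_⟩
        rw [hheadI hne]
        exact hh''

/-- Let `n > 1` and let `k` be an integer with `1 ≤ k < z₁(n)`.  If `z₁(k) = F_t`
(`t` being a Zeckendorf index, so `t ≥ 2`), then `z₁(n - k)` is equal to `F_{t+1}`
or to `F_{t-1}`. -/
theorem z1_sub_eq_fib_succ_or_fib_pred (n k t : ℕ) (ln lk lm : List ℕ)
    (hln : IsZeck n ln) (hlk : IsZeck k lk) (hlm : IsZeck (n - k) lm)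
    (hn : 1 < n) (hk1 : 1 ≤ k) (hk2 : k < Nat.fib ln.headI)
    (ht : 2 ≤ t) (hzk : Nat.fib lk.headI = Nat.fib t) :
    Nat.fib lm.headI = Nat.fib (t + 1) ∨ Nat.fib lm.headI = Nat.fib (t - 1) := by
  -- ln = a :: L
  rcases ln with _ | ⟨a, L⟩
  · exact absurd rfl (zeck_pos_ne_nil hln (by omega))
  obtain ⟨h2n, hcn, hsn⟩ := hln
  simp only [List.headI] at hk2
  have ha2 : 2 ≤ a := h2n a (by simp)
  simp only [List.map_cons, List.sum_cons] at hsn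
  -- headI lk = t
  have hlkne : lk ≠ [] := zeck_pos_ne_nil hlk hk1
  have hlkh2 : 2 ≤ lk.headI := by
    rcases lk with _ | ⟨c, r⟩
    · exact absurd rfl hlkne
    · exact hlk.1 c (by simp)
  have hht : lk.headI = t := fib_inj hlkh2 ht hzk
  -- apply the key lemma
  obtain ⟨l', hz', hlt', hh'⟩ := zeck_fib_sub a k lk hk1 hk2 hlk
  -- lm = l' ++ L
  have hLfacts := List.isChain_cons.1 hcn
  have hzm : IsZeck (n - k) (l' ++ L) := by
    refine ⟨?_, ?_, ?_⟩
    · intro i hi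
      rcases List.mem_append.1 hi with hi | hi
      · exact hz'.1 i hi
      · exact h2n i (by simp [hi])
    · apply List.isChain_append.2
      refine ⟨hz'.2.1, hLfacts.2, ?_⟩
      intro x hx y hy
      have hxl : x ∈ l' := List.mem_of_mem_getLast? hx
      have hx' := hlt' x hxl
      have hy' : a + 2 ≤ y := hLfacts.1 y hy
      omega
    · rw [List.map_append, List.sum_append, hz'.2.2]
      omega
  have hlm' : lm = l' ++ L := isZeck_unique hlm hzm
  have hl'ne : l' ≠ [] := by
    intro he
    have := hz'.2.2
    rw [he] at this
    simp at this
    omega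
  have hheadm : lm.headI = l'.headI := by
    rw [hlm']
    rcases l' with _ | ⟨c, r⟩
    · exact absurd rfl hl'ne
    · rfl
  rw [hheadm, ← hht]
  exact hh'
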